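/- For every snark G, df(G) ≥ ⌈girth(G)/2⌉: any triple of perfect matchings of G leaves at least ⌈girth(G)/2⌉ edges uncovered. -/

import Mathlib

open SimpleGraph Finset

/-- A proper 3-edge-colouring of `G`: edges sharing a vertex get distinct colours. -/
def IsProper3EdgeColoring {V : Type*} (G : SimpleGraph V) (c : Sym2 V → Fin 3) : Prop :=
  ∀ (v : V) (e f : Sym2 V), e ∈ G.edgeSet → f ∈ G.edgeSet →
    v ∈ e → v ∈ f → e ≠ f → c e ≠ c f

/-- `M` is (the edge set of) a perfect matching of `G`. -/
def IsPerfectMatchingSet {V : Type*} (G : SimpleGraph V) (M : Finset (Sym2 V)) : Prop :=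
  (↑M : Set (Sym2 V)) ⊆ G.edgeSet ∧ ∀ v : V, ∃! e, e ∈ M ∧ v ∈ e

/-- A snark: a 2-connected cubic graph (connected and remaining connected after the
removal of any single vertex) with no proper 3-edge-colouring. -/
def IsSnark {V : Type*} [Fintype V] [DecidableEq V]
    (G : SimpleGraph V) [DecidableRel G.Adj] : Prop :=
  (∀ v : V, G.degree v = 3) ∧ G.Connected ∧
  (∀ v : V, (((⊤ : G.Subgraph).deleteVerts {v}).coe).Connected) ∧
  ¬ ∃ c : Sym2 V → Fin 3, IsProper3EdgeColoring G c

/-- The number of odd components (components with an odd number of vertices) of `H`. -/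
noncomputable def oddComponentsCount {V : Type*} (H : SimpleGraph V) : ℕ :=
  Nat.card {c : H.ConnectedComponent // Odd (Nat.card c.supp)}

/-- The oddness of a (bridgeless cubic) graph: the minimum number of odd circuits in a
2-factor, a 2-factor being the complement of a perfect matching. -/
noncomputable def oddness {V : Type*} (G : SimpleGraph V) : ℕ :=
  sInf {n | ∃ M : Finset (Sym2 V), IsPerfectMatchingSet G M ∧
    n = oddComponentsCount (G.deleteEdges ↑M)}

/-- The density of `G`: the minimum number of common edges of two perfect matchings. -/
noncomputable def density {V : Type*} [DecidableEq V] (G : SimpleGraph V) : ℕ :=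
  sInf {n | ∃ M₁ M₂ : Finset (Sym2 V), IsPerfectMatchingSet G M₁ ∧
    IsPerfectMatchingSet G M₂ ∧ n = (M₁ ∩ M₂).card}

/-- The number of edges of `G` left uncovered by the 3-array `{M₁, M₂, M₃}`. -/
def uncoveredCard {V : Type*} [Fintype V] [DecidableEq V]
    (G : SimpleGraph V) [DecidableRel G.Adj] (M₁ M₂ M₃ : Finset (Sym2 V)) : ℕ :=
  (G.edgeFinset.filter fun e => e ∉ M₁ ∧ e ∉ M₂ ∧ e ∉ M₃).card

/-- The colouring defect of `G`: the minimum number of edges left uncovered by a triple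
of perfect matchings. -/
noncomputable def defect {V : Type*} [Fintype V] [DecidableEq V]
    (G : SimpleGraph V) [DecidableRel G.Adj] : ℕ :=
  sInf {n | ∃ M₁ M₂ M₃ : Finset (Sym2 V), IsPerfectMatchingSet G M₁ ∧
    IsPerfectMatchingSet G M₂ ∧ IsPerfectMatchingSet G M₃ ∧
    n = uncoveredCard G M₁ M₂ M₃}

section AuxForDefect
variable {V : Type*}

lemma path_start_edge {H : SimpleGraph V} {a b x : V} (p : H.Walk a b) (hp : p.IsPath)
    (hx : s(a, x) ∈ p.edges) : x = p.getVert 1 := by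
  cases p with
  | nil => simp at hx
  | cons h q =>
    rw [SimpleGraph.Walk.edges_cons, List.mem_cons] at hx
    rcases hx with h1 | h2
    · rw [Sym2.congr_right] at h1
      subst h1
      simp [SimpleGraph.Walk.getVert_cons_succ]
    · exfalso
      have := SimpleGraph.Walk.fst_mem_support_of_mem_edges q h2
      rw [SimpleGraph.Walk.cons_isPath_iff] at hp
      exact hp.2 this

lemma exists_cycle_of_two_nbrs [Fintype V] {H : SimpleGraph V}
    (hedge : ∃ u v, H.Adj u v)
    (hdeg : ∀ v x, H.Adj v x → ∃ y z, y ≠ z ∧ H.Adj v y ∧ H.Adj v z) :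
    ∃ (a : V) (c : H.Walk a a), c.IsCycle := by
  classical
  set P : ℕ → Prop := fun n => ∃ (a b : V) (p : H.Walk a b), p.IsPath ∧ n ≤ p.length with hP
  obtain ⟨u, v, huv⟩ := hedge
  have hP1 : P 1 := by
    refine ⟨u, v, Walk.cons huv Walk.nil, ?_, by simp⟩
    rw [SimpleGraph.Walk.cons_isPath_iff]
    exact ⟨SimpleGraph.Walk.IsPath.nil, by simp [huv.ne]⟩
  have hnot : ¬ P (Fintype.card V) := by
    rintro ⟨a, b, p, hp, hlen⟩
    exact absurd hp.length_lt (by omega)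
  have hex : ∃ n, ¬ P n := ⟨_, hnot⟩
  set k := Nat.find hex with hk
  have hnk : ¬ P k := Nat.find_spec hex
  have hk2 : 2 ≤ k := by
    rcases Nat.lt_or_ge k 2 with h | h
    · interval_cases k
      · exact absurd (⟨u, v, Walk.cons huv Walk.nil, by
          rw [SimpleGraph.Walk.cons_isPath_iff]
          exact ⟨SimpleGraph.Walk.IsPath.nil, by simp [huv.ne]⟩, by simp⟩ : P 0) hnk
      · exact absurd hP1 hnk
    · exact h
  have hPk1 : P (k - 1) := by
    have := Nat.find_min hex (m := k - 1) (by omega)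
    simpa using this
  obtain ⟨a, b, p, hp, hlen⟩ := hPk1
  have hplen : 0 < p.length := by omega
  have hnn : ¬ p.Nil := by rw [SimpleGraph.Walk.not_nil_iff_lt_length]; exact hplen
  have hadj1 : H.Adj a (p.getVert 1) := by simpa using p.adj_getVert_succ (i := 0) hplen
  obtain ⟨y, z, hyz, hay, haz⟩ := hdeg a _ hadj1
  have hw : ∃ w, H.Adj a w ∧ w ≠ p.getVert 1 := by
    by_cases hy : y = p.getVert 1
    · exact ⟨z, haz, by rw [← hy]; exact fun h => hyz h.symm⟩
    · exact ⟨y, hay, hy⟩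
  obtain ⟨w, haw, hwne⟩ := hw
  by_cases hws : w ∈ p.support
  · refine ⟨w, Walk.cons haw.symm (p.takeUntil w hws), ?_⟩
    rw [SimpleGraph.Walk.cons_isCycle_iff]
    refine ⟨hp.takeUntil hws, fun hmem => ?_⟩
    have : s(a, w) ∈ p.edges := by
      have := SimpleGraph.Walk.edges_takeUntil_subset p hws hmem
      rwa [Sym2.eq_swap] at this
    exact hwne (path_start_edge p hp this)
  · exact absurd (⟨w, b, Walk.cons haw.symm p, by
      rw [SimpleGraph.Walk.cons_isPath_iff]; exact ⟨hp, hws⟩, by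
      simp only [SimpleGraph.Walk.length_cons]; omega⟩ : P k) hnk

/-- The core graph of a 3-array: edges of `G` covered zero times or more than once. -/
def coreGraph (G : SimpleGraph V) (M₁ M₂ M₃ : Finset (Sym2 V)) : SimpleGraph V where
  Adj u v := G.Adj u v ∧
    ¬ ((s(u,v) ∈ M₁ ∧ s(u,v) ∉ M₂ ∧ s(u,v) ∉ M₃) ∨
       (s(u,v) ∉ M₁ ∧ s(u,v) ∈ M₂ ∧ s(u,v) ∉ M₃) ∨
       (s(u,v) ∉ M₁ ∧ s(u,v) ∉ M₂ ∧ s(u,v) ∈ M₃))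
  symm := ⟨by
    intro u v h
    refine ⟨h.1.symm, ?_⟩
    have := h.2
    rwa [Sym2.eq_swap] at this⟩
  loopless := ⟨fun v h => G.loopless.irrefl v h.1⟩

lemma coreGraph_adj {G : SimpleGraph V} {M₁ M₂ M₃ : Finset (Sym2 V)} {u v : V} :
    (coreGraph G M₁ M₂ M₃).Adj u v ↔ G.Adj u v ∧
    ¬ ((s(u,v) ∈ M₁ ∧ s(u,v) ∉ M₂ ∧ s(u,v) ∉ M₃) ∨
       (s(u,v) ∉ M₁ ∧ s(u,v) ∈ M₂ ∧ s(u,v) ∉ M₃) ∨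
       (s(u,v) ∉ M₁ ∧ s(u,v) ∉ M₂ ∧ s(u,v) ∈ M₃)) := Iff.rfl

end AuxForDefect

set_option maxHeartbeats 2000000 in
/-- For every snark `G` with finite girth `g`, any triple of perfect matchings leaves at
least `⌈g/2⌉` edges uncovered; hence `df(G) ≥ ⌈girth(G)/2⌉`. -/
theorem defect_ge_half_girth
    {V : Type*} [Fintype V] [DecidableEq V]
    (G : SimpleGraph V) [DecidableRel G.Adj]
    (hsnark : IsSnark G)
    (g : ℕ) (hg : G.girth = (g : ℕ∞))
    (M₁ M₂ M₃ : Finset (Sym2 V))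
    (h₁ : IsPerfectMatchingSet G M₁) (h₂ : IsPerfectMatchingSet G M₂)
    (h₃ : IsPerfectMatchingSet G M₃) :
    (g + 1) / 2 ≤ uncoveredCard G M₁ M₂ M₃ := by
  classical
  obtain ⟨hdeg3, -, -, hnc⟩ := hsnark
  rcases Nat.eq_zero_or_pos g with rfl | hg1
  · simp
  set U : Finset (Sym2 V) := G.edgeFinset.filter (fun e => e ∉ M₁ ∧ e ∉ M₂ ∧ e ∉ M₃) with hU
  have hUcard : uncoveredCard G M₁ M₂ M₃ = U.card := rfl
  rw [hUcard]
  suffices hg2 : g ≤ 2 * U.card by omega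
  have hmatch : ∀ (M : Finset (Sym2 V)), IsPerfectMatchingSet G M →
      ∀ (v : V) (e f : Sym2 V), e ∈ M → v ∈ e → f ∈ M → v ∈ f → e = f := by
    intro M hM v e f he hve hf hvf
    obtain ⟨a, -, ha⟩ := hM.2 v
    rw [ha e ⟨he, hve⟩, ha f ⟨hf, hvf⟩]
  have hUne : U.Nonempty := by
    rw [Finset.nonempty_iff_ne_empty]
    intro hUe
    refine hnc ⟨fun e => if e ∈ M₁ then 0 else if e ∈ M₂ then 1 else 2, ?_⟩
    intro v e f he hf hve hvf hef hcc
    have hcov : ∀ x, x ∈ G.edgeSet → x ∉ M₁ → x ∉ M₂ → x ∈ M₃ := by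
      intro x hx hx1 hx2
      by_contra hx3
      have hxU : x ∈ U := by
        simp only [hU, Finset.mem_filter, SimpleGraph.mem_edgeFinset]
        exact ⟨hx, hx1, hx2, hx3⟩
      rw [hUe] at hxU
      simp at hxU
    have key : ∀ (M : Finset (Sym2 V)), IsPerfectMatchingSet G M → e ∈ M → f ∈ M → False := by
      intro M hM heM hfM
      exact hef (hmatch M hM v e f heM hve hfM hvf)
    dsimp only at hcc
    split_ifs at hcc <;>
      first
        | exact absurd hcc (by decide)
        | exact key M₁ h₁ ‹_› ‹_›
        | exact key M₂ h₂ ‹_› ‹_›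
        | exact key M₃ h₃ (hcov e he ‹_› ‹_›) (hcov f hf ‹_› ‹_›)
  set H : SimpleGraph V := coreGraph G M₁ M₂ M₃ with hHdef
  have huncov_nbr : ∀ v x : V, G.Adj v x → s(v,x) ∉ M₁ → s(v,x) ∉ M₂ → s(v,x) ∉ M₃ →
      ∃ y, y ≠ x ∧ H.Adj v y := by
    intro v x hvx hn1 hn2 hn3
    obtain ⟨a₁, ⟨ha₁M, ha₁v⟩, -⟩ := h₁.2 v
    obtain ⟨a₂, ⟨ha₂M, ha₂v⟩, -⟩ := h₂.2 v
    obtain ⟨a₃, ⟨ha₃M, ha₃v⟩, -⟩ := h₃.2 v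
    have hcard : (G.incidenceFinset v).card = 3 := by
      rw [SimpleGraph.card_incidenceFinset_eq_degree]; exact hdeg3 v
    have hne1 : s(v,x) ≠ a₁ := fun h => hn1 (h ▸ ha₁M)
    have hne2 : s(v,x) ≠ a₂ := fun h => hn2 (h ▸ ha₂M)
    have hne3 : s(v,x) ≠ a₃ := fun h => hn3 (h ▸ ha₃M)
    have hincm : ∀ (e : Sym2 V), e ∈ G.edgeSet → v ∈ e → e ∈ G.incidenceFinset v := by
      intro e heE hvm
      rw [SimpleGraph.mem_incidenceFinset]
      exact ⟨heE, hvm⟩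
    have hdup : a₁ = a₂ ∨ a₁ = a₃ ∨ a₂ = a₃ := by
      by_contra hcon
      push_neg at hcon
      have hsub : ({s(v,x), a₁, a₂, a₃} : Finset (Sym2 V)) ⊆ G.incidenceFinset v := by
        intro e he
        simp only [Finset.mem_insert, Finset.mem_singleton] at he
        rcases he with rfl | rfl | rfl | rfl
        · exact hincm _ hvx (by simp)
        · exact hincm _ (h₁.1 ha₁M) ha₁v
        · exact hincm _ (h₂.1 ha₂M) ha₂v
        · exact hincm _ (h₃.1 ha₃M) ha₃v
      have h4 : ({s(v,x), a₁, a₂, a₃} : Finset (Sym2 V)).card = 4 := by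
        rw [Finset.card_insert_of_notMem (by simp [hne1, hne2, hne3]),
            Finset.card_insert_of_notMem (by simp [hcon.1, hcon.2.1]),
            Finset.card_insert_of_notMem (by simp [hcon.2.2]), Finset.card_singleton]
      have := Finset.card_le_card hsub
      omega
    have hmulti : ∃ f : Sym2 V, v ∈ f ∧ f ∈ G.edgeSet ∧ f ≠ s(v,x) ∧
        ¬ ((f ∈ M₁ ∧ f ∉ M₂ ∧ f ∉ M₃) ∨ (f ∉ M₁ ∧ f ∈ M₂ ∧ f ∉ M₃) ∨
           (f ∉ M₁ ∧ f ∉ M₂ ∧ f ∈ M₃)) := by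
      rcases hdup with h | h | h
      · refine ⟨a₁, ha₁v, h₁.1 ha₁M, fun he => hne1 he.symm, ?_⟩
        rw [← h] at ha₂M
        tauto
      · refine ⟨a₁, ha₁v, h₁.1 ha₁M, fun he => hne1 he.symm, ?_⟩
        rw [← h] at ha₃M
        tauto
      · refine ⟨a₂, ha₂v, h₂.1 ha₂M, fun he => hne2 he.symm, ?_⟩
        rw [← h] at ha₃M
        tauto
    obtain ⟨f, hvf, hfE, hfne, hfm⟩ := hmulti
    obtain ⟨y, rfl⟩ := Sym2.mem_iff_exists.mp hvf
    refine ⟨y, ?_, by rw [hHdef, coreGraph_adj]; exact ⟨(G.mem_edgeSet).mp hfE, hfm⟩⟩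
    intro h
    exact hfne (by rw [h])
  have hmulti_unc : ∀ (v : V) (f : Sym2 V), v ∈ f →
      ((f ∈ M₁ ∧ f ∈ M₂) ∨ (f ∈ M₁ ∧ f ∈ M₃) ∨ (f ∈ M₂ ∧ f ∈ M₃)) →
      ∃ y, G.Adj v y ∧ s(v,y) ∉ M₁ ∧ s(v,y) ∉ M₂ ∧ s(v,y) ∉ M₃ := by
    intro v f hvf hf
    obtain ⟨a₁, ⟨ha₁M, ha₁v⟩, -⟩ := h₁.2 v
    obtain ⟨a₂, ⟨ha₂M, ha₂v⟩, -⟩ := h₂.2 v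
    obtain ⟨a₃, ⟨ha₃M, ha₃v⟩, -⟩ := h₃.2 v
    have hdup : a₁ = a₂ ∨ a₁ = a₃ ∨ a₂ = a₃ := by
      rcases hf with ⟨hfa, hfb⟩ | ⟨hfa, hfb⟩ | ⟨hfa, hfb⟩
      · exact Or.inl ((hmatch M₁ h₁ v a₁ f ha₁M ha₁v hfa hvf).trans
          (hmatch M₂ h₂ v f a₂ hfb hvf ha₂M ha₂v))
      · exact Or.inr (Or.inl ((hmatch M₁ h₁ v a₁ f ha₁M ha₁v hfa hvf).trans
          (hmatch M₃ h₃ v f a₃ hfb hvf ha₃M ha₃v)))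
      · exact Or.inr (Or.inr ((hmatch M₂ h₂ v a₂ f ha₂M ha₂v hfa hvf).trans
          (hmatch M₃ h₃ v f a₃ hfb hvf ha₃M ha₃v)))
    by_contra hno
    push_neg at hno
    have hsub : G.incidenceFinset v ⊆ {a₁, a₂, a₃} := by
      intro e he
      rw [SimpleGraph.mem_incidenceFinset] at he
      obtain ⟨heE, hvm⟩ := he
      obtain ⟨y, rfl⟩ := Sym2.mem_iff_exists.mp hvm
      have hadj : G.Adj v y := (G.mem_edgeSet).mp heE
      by_cases k1 : s(v,y) ∈ M₁
      · have := hmatch M₁ h₁ v s(v,y) a₁ k1 (by simp) ha₁M ha₁v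
        simp [this]
      · by_cases k2 : s(v,y) ∈ M₂
        · have := hmatch M₂ h₂ v s(v,y) a₂ k2 (by simp) ha₂M ha₂v
          simp [this]
        · have k3 := hno y hadj k1 k2
          have := hmatch M₃ h₃ v s(v,y) a₃ k3 (by simp) ha₃M ha₃v
          simp [this]
    have hcard : (G.incidenceFinset v).card = 3 := by
      rw [SimpleGraph.card_incidenceFinset_eq_degree]; exact hdeg3 v
    have hcard2 : ({a₁, a₂, a₃} : Finset (Sym2 V)).card ≤ 2 := by
      rcases hdup with h | h | h
      · have hs : ({a₁, a₂, a₃} : Finset (Sym2 V)) ⊆ {a₂, a₃} := by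
          rw [h]; intro e he; simp at he ⊢; tauto
        exact le_trans (Finset.card_le_card hs)
          (le_trans (Finset.card_insert_le _ _) (by simp))
      · have hs : ({a₁, a₂, a₃} : Finset (Sym2 V)) ⊆ {a₂, a₃} := by
          rw [h]; intro e he; simp at he ⊢; tauto
        exact le_trans (Finset.card_le_card hs)
          (le_trans (Finset.card_insert_le _ _) (by simp))
      · have hs : ({a₁, a₂, a₃} : Finset (Sym2 V)) ⊆ {a₁, a₂} := by
          rw [h]; intro e he; simp at he ⊢; tauto
        exact le_trans (Finset.card_le_card hs)
          (le_trans (Finset.card_insert_le _ _) (by simp))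
    have := Finset.card_le_card hsub
    omega
  have htwo : ∀ v x : V, H.Adj v x → ∃ y z, y ≠ z ∧ H.Adj v y ∧ H.Adj v z := by
    intro v x hvx
    rw [hHdef, coreGraph_adj] at hvx
    obtain ⟨hadj, hnex⟩ := hvx
    by_cases hu : s(v,x) ∉ M₁ ∧ s(v,x) ∉ M₂ ∧ s(v,x) ∉ M₃
    · obtain ⟨y, hyx, hy⟩ := huncov_nbr v x hadj hu.1 hu.2.1 hu.2.2
      exact ⟨y, x, hyx, hy, by rw [hHdef, coreGraph_adj]; exact ⟨hadj, hnex⟩⟩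
    · have hm : (s(v,x) ∈ M₁ ∧ s(v,x) ∈ M₂) ∨ (s(v,x) ∈ M₁ ∧ s(v,x) ∈ M₃) ∨
          (s(v,x) ∈ M₂ ∧ s(v,x) ∈ M₃) := by tauto
      obtain ⟨y, hady, hy1, hy2, hy3⟩ := hmulti_unc v s(v,x) (by simp) hm
      have hHy : H.Adj v y := by rw [hHdef, coreGraph_adj]; exact ⟨hady, by tauto⟩
      obtain ⟨z, hzy, hz⟩ := huncov_nbr v y hady hy1 hy2 hy3
      exact ⟨z, y, hzy, hz, hHy⟩
  have hedge : ∃ u w, H.Adj u w := by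
    obtain ⟨e₀, he₀⟩ := hUne
    simp only [hU, Finset.mem_filter, SimpleGraph.mem_edgeFinset] at he₀
    obtain ⟨heE, hu1, hu2, hu3⟩ := he₀
    revert heE hu1 hu2 hu3
    induction e₀ using Sym2.ind with
    | _ u w =>
      intro heE hu1 hu2 hu3
      refine ⟨u, w, ?_⟩
      rw [hHdef, coreGraph_adj]
      exact ⟨(G.mem_edgeSet).mp heE, by tauto⟩
  obtain ⟨a, c, hc⟩ := exists_cycle_of_two_nbrs hedge htwo
  have hle : H ≤ G := fun u w h => ((coreGraph_adj).mp (hHdef ▸ h)).1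
  have hc' : (c.mapLe hle).IsCycle := (SimpleGraph.Walk.mapLe_isCycle hle).mpr hc
  have hegirth : G.egirth ≤ ((c.mapLe hle).length : ℕ∞) :=
    SimpleGraph.le_egirth.mp le_rfl a _ hc'
  have hglen : g ≤ c.length := by
    have hgn : G.girth = g := by exact_mod_cast hg
    have hh : G.girth ≤ (c.mapLe hle).length := by
      have := ENat.toNat_le_toNat hegirth (by simp)
      simpa [SimpleGraph.girth] using this
    rw [hgn] at hh
    rwa [SimpleGraph.Walk.length_map] at hh
  set C : Finset V := Finset.univ.filter (fun v => ∃ e ∈ U, v ∈ e) with hC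
  have hsupC : ∀ v ∈ c.support, v ∈ C := by
    intro v hv
    have hrlen : (c.rotate v hv).length = c.length := by
      have hperm := (SimpleGraph.Walk.support_rotate c v hv).perm.length_eq
      have e1 := SimpleGraph.Walk.length_support (c.rotate v hv)
      have e2 := SimpleGraph.Walk.length_support c
      have l1 : (c.rotate v hv).support.tail.length = (c.rotate v hv).length := by
        rw [List.length_tail, e1]; omega
      have l2 : c.support.tail.length = c.length := by
        rw [List.length_tail, e2]; omega
      omega
    have hrn : ¬ (c.rotate v hv).Nil := by
      rw [SimpleGraph.Walk.not_nil_iff_lt_length, hrlen]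
      have := hc.three_le_length
      omega
    have hadj : H.Adj v ((c.rotate v hv).getVert 1) := by
      simpa using (c.rotate v hv).adj_getVert_succ (i := 0) (SimpleGraph.Walk.not_nil_iff_lt_length.mp hrn)
    obtain ⟨hG1, hnex⟩ := coreGraph_adj.mp hadj
    set x1 : V := (c.rotate v hv).getVert 1 with hx1
    clear_value x1
    clear hadj hrn hrlen hx1
    simp only [hC, Finset.mem_filter]
    refine ⟨Finset.mem_univ v, ?_⟩
    by_cases huc : s(v, x1) ∉ M₁ ∧ s(v, x1) ∉ M₂ ∧ s(v, x1) ∉ M₃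
    · refine ⟨s(v, x1), ?_, by simp⟩
      simp only [hU, Finset.mem_filter, SimpleGraph.mem_edgeFinset]
      exact ⟨hG1, huc⟩
    · have hm : (s(v, x1) ∈ M₁ ∧ s(v, x1) ∈ M₂) ∨
          (s(v, x1) ∈ M₁ ∧ s(v, x1) ∈ M₃) ∨
          (s(v, x1) ∈ M₂ ∧ s(v, x1) ∈ M₃) := by
        tauto
      obtain ⟨y, hady, hy1, hy2, hy3⟩ := hmulti_unc v _ (by simp) hm
      refine ⟨s(v, y), ?_, by simp⟩
      simp only [hU, Finset.mem_filter, SimpleGraph.mem_edgeFinset]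
      exact ⟨hady, hy1, hy2, hy3⟩
  have hgC : g ≤ C.card := by
    have h1 : c.support.tail.Nodup := hc.support_nodup
    have h2 : c.support.tail.length = c.length := by
      rw [List.length_tail, SimpleGraph.Walk.length_support]; omega
    have hsub : c.support.tail.toFinset ⊆ C := by
      intro v hv
      exact hsupC v (List.mem_of_mem_tail (List.mem_toFinset.mp hv))
    have := Finset.card_le_card hsub
    rw [List.toFinset_card_of_nodup h1, h2] at this
    omega
  have hbound : ∀ e : Sym2 V, (Finset.univ.filter (fun v => v ∈ e)).card ≤ 2 := by
    intro e
    induction e using Sym2.ind with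
    | _ x y =>
      have hsub2 : (Finset.univ.filter (fun v => v ∈ s(x,y))) ⊆ ({x, y} : Finset V) := by
        intro v hv
        simp only [Finset.mem_filter, Sym2.mem_iff] at hv
        rcases hv.2 with rfl | rfl <;> simp
      exact le_trans (Finset.card_le_card hsub2)
        (le_trans (Finset.card_insert_le _ _) (by simp))
  have hC2U : C.card ≤ 2 * U.card := by
    have hsub : C ⊆ U.biUnion (fun e => Finset.univ.filter (fun v => v ∈ e)) := by
      intro v hv
      simp only [hC, Finset.mem_filter] at hv
      obtain ⟨-, e, heU, hve⟩ := hv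
      exact Finset.mem_biUnion.mpr ⟨e, heU, by simp [hve]⟩
    calc C.card ≤ (U.biUnion (fun e => Finset.univ.filter (fun v => v ∈ e))).card :=
          Finset.card_le_card hsub
      _ ≤ ∑ e ∈ U, (Finset.univ.filter (fun v => v ∈ e)).card := Finset.card_biUnion_le
      _ ≤ U.card * 2 := by
          simpa using Finset.sum_le_card_nsmul U _ 2 (fun e _ => hbound e)
      _ = 2 * U.card := mul_comm _ _
  omega
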